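/- If f₁, f₂, f₃ are orthonormal imaginary octonions and φ = ⟨f₁, f₂f₃⟩, then f₃(f₁f₂) = -2φ - (f₁f₂)f₃. -/

import Mathlib

noncomputable section

open Quaternion

/-- Octonions as pairs of quaternions (Cayley–Dickson construction). -/
abbrev Octo : Type := ℍ[ℝ] × ℍ[ℝ]

/-- Octonion multiplication: (q,r)(s,t) = (qs - t̄r, tq + rs̄). -/
def omul (x y : Octo) : Octo :=
  (x.1 * y.1 - star y.2 * x.2, y.2 * x.1 + x.2 * star y.1)

/-- Octonion conjugation: (q,r)̄ = (q̄, -r). -/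
def oconj (x : Octo) : Octo := (star x.1, -x.2)

/-- Inner product ⟨x,y⟩ = (x ȳ + y x̄)/2 (a real multiple of 1, returned as a real). -/
def oinner (x y : Octo) : ℝ :=
  ((omul x (oconj y) + omul y (oconj x)).1).re / 2

/-- x is an imaginary octonion: x + x̄ = 0. -/
def IsIm (x : Octo) : Prop := x + oconj x = 0

/-- Embedding of the reals into the octonions. -/
def oR (r : ℝ) : Octo := ((r : ℍ[ℝ]), 0)

/-- Cross product x×y = (xy - yx)/2. -/
def ocross (x y : Octo) : Octo := (2⁻¹ : ℝ) • (omul x y - omul y x)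

/-- Norm of an octonion. -/
def onorm (x : Octo) : ℝ := Real.sqrt (oinner x x)

/-- Associator [x,y,z] = (xy)z - x(yz). -/
def oassoc (x y z : Octo) : Octo := omul (omul x y) z - omul x (omul y z)

/-- f₁,f₂,f₃ are orthonormal. -/
def OrthoTriple (f1 f2 f3 : Octo) : Prop :=
  oinner f1 f1 = 1 ∧ oinner f2 f2 = 1 ∧ oinner f3 f3 = 1 ∧
  oinner f1 f2 = 0 ∧ oinner f1 f3 = 0 ∧ oinner f2 f3 = 0


set_option maxHeartbeats 4000000

/-- For orthonormal imaginary f₁,f₂,f₃ with φ = ⟨f₁,f₂f₃⟩: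
    f₃(f₁f₂) = -2φ - (f₁f₂)f₃. -/
theorem stmt4 (f1 f2 f3 : Octo) (h1 : IsIm f1) (h2 : IsIm f2) (h3 : IsIm f3)
    (hortho : OrthoTriple f1 f2 f3) :
    omul f3 (omul f1 f2) = oR (-2 * oinner f1 (omul f2 f3)) - omul (omul f1 f2) f3 := by
  obtain ⟨p1, q1⟩ := f1
  obtain ⟨p2, q2⟩ := f2
  obtain ⟨p3, q3⟩ := f3
  have ha : p1.re = 0 := by simpa [IsIm, oconj] using congrArg (fun x : Octo => x.1.re) h1
  have hc : p2.re = 0 := by simpa [IsIm, oconj] using congrArg (fun x : Octo => x.1.re) h2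
  have he : p3.re = 0 := by simpa [IsIm, oconj] using congrArg (fun x : Octo => x.1.re) h3
  obtain ⟨-, -, -, h12, -, -⟩ := hortho
  simp only [oinner, omul, oconj] at h12
  simp [Quaternion.re_mul, ha, hc] at h12
  have h12' : p1.imI*p2.imI + p1.imJ*p2.imJ + p1.imK*p2.imK + q1.re*q2.re + q1.imI*q2.imI + q1.imJ*q2.imJ + q1.imK*q2.imK = 0 := by
    linear_combination h12 / 2
  refine Prod.ext (QuaternionAlgebra.ext ?_ ?_ ?_ ?_) (QuaternionAlgebra.ext ?_ ?_ ?_ ?_) <;>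
    simp [omul, oR, oinner, oconj, Quaternion.re_mul, Quaternion.imI_mul,
      Quaternion.imJ_mul, Quaternion.imK_mul, ha, hc, he]
  all_goals norm_cast
  · linear_combination (0:ℝ) * h12'
  · linear_combination (-2*p3.imI) * h12'
  · linear_combination (-2*p3.imJ) * h12'
  · linear_combination (-2*p3.imK) * h12'
  · linear_combination (-2*q3.re) * h12'
  · linear_combination (-2*q3.imI) * h12'
  · linear_combination (-2*q3.imJ) * h12'
  · linear_combination (-2*q3.imK) * h12'
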